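/- For every t in the closed interval [-1,1] and all nonnegative integers n and k, the Jacobi polynomial with parameters (0,k) satisfies the bound |(1+t)^k · P_n^{(0,k)}(t)| ≤ 2^k. -/

import Mathlib

open Finset

/-- The Jacobi polynomial `P_n^{(α,β)}` with nonnegative integer parameters,
as a function of a real variable:
`P_n^{(α,β)}(t) = Σ_{j=0}^{n} C(n+α, n−j) · C(n+β, j) · ((t−1)/2)^j · ((t+1)/2)^{n−j}`. -/
noncomputable def jacobiP (n α β : ℕ) (t : ℝ) : ℝ :=
  ∑ j ∈ Finset.range (n + 1),
    ((n + α).choose (n - j) : ℝ) * ((n + β).choose j : ℝ) *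
      ((t - 1) / 2) ^ j * ((t + 1) / 2) ^ (n - j)

/-! ### Combinatorial identities -/

lemma jacobi_aux_B0 (n m : ℕ) :
    (m+1)^2 * (n.choose (m+1) * (n+m+1).choose (m+1)) =
      (n-m)*(n+m+1) * (n.choose m * (n+m).choose m) := by
  have h1 : n.choose (m+1) * (m+1) = n.choose m * (n - m) := Nat.choose_succ_right_eq n m
  have h2 : (n+m+1) * (n+m).choose m = (n+m+1).choose (m+1) * (m+1) :=
    Nat.add_one_mul_choose_eq (n+m) m
  calc (m+1)^2 * (n.choose (m+1) * (n+m+1).choose (m+1))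
      = (n.choose (m+1) * (m+1)) * ((n+m+1).choose (m+1) * (m+1)) := by ring
    _ = (n.choose m * (n-m)) * ((n+m+1) * (n+m).choose m) := by rw [h1, ← h2]
    _ = (n-m)*(n+m+1) * (n.choose m * (n+m).choose m) := by ring

lemma jacobi_aux_shiftC (N m : ℕ) : (N+1) * N.choose m = (N+1).choose m * (N+1-m) := by
  have h1 : (N+1) * N.choose m = (N+1).choose (m+1) * (m+1) := Nat.add_one_mul_choose_eq N m
  have h2 : (N+1).choose (m+1) * (m+1) = (N+1).choose m * (N+1-m) :=
    Nat.choose_succ_right_eq (N+1) m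
  rw [h1, h2]

lemma jacobi_aux_Cprime (n k m : ℕ) :
    (n+k+1) * ((n+k+m+1).choose m * (n+1).choose (m+1)) =
      (n+1) * (n.choose m * (n+k+m+1).choose (m+1)) := by
  apply Nat.eq_of_mul_eq_mul_right (Nat.succ_pos m)
  have h1 : (n+1).choose (m+1) * (m+1) = (n+1) * n.choose m :=
    (Nat.add_one_mul_choose_eq n m).symm
  have h2 : (n+k+m+1).choose (m+1) * (m+1) = (n+k+m+1) * (n+k+m).choose m :=
    (Nat.add_one_mul_choose_eq (n+k+m) m).symm
  have h3 : (n+k+m+1) * (n+k+m).choose m = (n+k+m+1).choose m * (n+k+1) := by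
    have := jacobi_aux_shiftC (n+k+m) m
    have he : n+k+m+1-m = n+k+1 := by omega
    rw [he] at this; exact this
  calc (n+k+1) * ((n+k+m+1).choose m * (n+1).choose (m+1)) * (m+1)
      = (n+k+1) * (n+k+m+1).choose m * ((n+1).choose (m+1) * (m+1)) := by ring
    _ = (n+k+1) * (n+k+m+1).choose m * ((n+1) * n.choose m) := by rw [h1]
    _ = (n+1) * n.choose m * ((n+k+m+1).choose m * (n+k+1)) := by ring
    _ = (n+1) * n.choose m * ((n+k+m+1) * (n+k+m).choose m) := by rw [← h3]
    _ = (n+1) * n.choose m * ((n+k+m+1).choose (m+1) * (m+1)) := by rw [h2]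
    _ = (n+1) * (n.choose m * (n+k+m+1).choose (m+1)) * (m+1) := by ring

lemma jacobi_aux_Bprime (n k m : ℕ) :
    ((2*n+k+2 : ℕ) : ℝ) * ((n.choose (m+1) * (n+k+m+2).choose (m+1) : ℕ)
        + (n.choose m * (n+k+m+1).choose m : ℕ)) =
      ((n+k+1 : ℕ) : ℝ) * (n.choose (m+1) * (n+k+m+1).choose (m+1) : ℕ)
        + ((n+1 : ℕ) : ℝ) * ((n+1).choose (m+1) * (n+k+m+2).choose (m+1) : ℕ) := by
  have pas1 : (n+1).choose (m+1) = n.choose m + n.choose (m+1) := Nat.choose_succ_succ n m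
  have pas2 : (n+k+m+2).choose (m+1) = (n+k+m+1).choose m + (n+k+m+1).choose (m+1) :=
    Nat.choose_succ_succ (n+k+m+1) m
  have hc : ((n+k+1) * ((n+k+m+1).choose m * (n+1).choose (m+1)) : ℝ)
      = (n+1) * (n.choose m * (n+k+m+1).choose (m+1)) := by
    exact_mod_cast jacobi_aux_Cprime n k m
  rw [pas1] at hc
  push_cast [pas1, pas2]
  push_cast at hc
  linear_combination hc

lemma jacobi_aux_vander (n k m : ℕ) :
    ∑ j ∈ range (m+1), m.choose j * (n+k).choose j = (n+k+m).choose m := by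
  have h1 : ∀ j ∈ range (m+1), m.choose j * (n+k).choose j
      = m.choose (m-j) * (n+k).choose j := by
    intro j hj
    rw [Nat.choose_symm (by simpa [Nat.lt_succ_iff] using hj)]
  rw [sum_congr rfl h1]
  have h2 := Finset.sum_range_reflect (fun j => m.choose (m-j) * (n+k).choose j) (m+1)
  simp only [Nat.add_sub_cancel] at h2
  have h3 : ∀ j ∈ range (m+1), m.choose (m - (m - j)) * (n+k).choose (m-j)
      = m.choose j * (n+k).choose (m-j) := by
    intro j hj
    rw [Nat.sub_sub_self (by simpa [Nat.lt_succ_iff] using hj)]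
  rw [← h2, sum_congr rfl h3]
  have hv := Nat.add_choose_eq m (n+k) m
  rw [Finset.Nat.sum_antidiagonal_eq_sum_range_succ_mk] at hv
  rw [← hv, Nat.add_comm m (n+k)]

lemma jacobi_aux_inner (n k m : ℕ) (hm : m ≤ n) :
    ∑ j ∈ range (m+1), n.choose j * (n+k).choose j * (n-j).choose (m-j)
      = n.choose m * (n+k+m).choose m := by
  have h1 : ∀ j ∈ range (m+1), n.choose j * (n+k).choose j * (n-j).choose (m-j)
      = n.choose m * (m.choose j * (n+k).choose j) := by
    intro j hj
    have hj' : j ≤ m := by simpa [Nat.lt_succ_iff] using hj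
    have := Nat.choose_mul (n := n) hj'
    calc n.choose j * (n+k).choose j * (n-j).choose (m-j)
        = n.choose j * (n-j).choose (m-j) * (n+k).choose j := by ring
      _ = n.choose m * m.choose j * (n+k).choose j := by rw [← this]
      _ = n.choose m * (m.choose j * (n+k).choose j) := by ring
  rw [sum_congr rfl h1, ← Finset.mul_sum, jacobi_aux_vander n k m]

/-! ### Closed form in the `(t-1)/2` basis -/

lemma jacobiP_eq (n k : ℕ) (t : ℝ) :
    jacobiP n 0 k t
      = ∑ m ∈ range (n+1), ((n.choose m * (n+k+m).choose m : ℕ) : ℝ) * ((t-1)/2)^m := by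
  set w : ℝ := (t-1)/2 with hw
  have hu : (t+1)/2 = w + 1 := by rw [hw]; ring
  unfold jacobiP
  rw [hu]
  have step1 : ∀ j ∈ range (n+1),
      ((n + 0).choose (n - j) : ℝ) * ((n + k).choose j : ℝ) * w ^ j * (w+1) ^ (n - j)
      = ∑ i ∈ range (n+1-j), ((n.choose j * (n+k).choose j * (n-j).choose i : ℕ) : ℝ) * w^(j+i) := by
    intro j hj
    have hj' : j ≤ n := by simpa [Nat.lt_succ_iff] using hj
    have hsymm : (n+0).choose (n-j) = n.choose j := by
      rw [Nat.add_zero, Nat.choose_symm hj']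
    rw [hsymm, add_pow w 1 (n-j)]
    have hrange : n - j + 1 = n + 1 - j := by omega
    rw [hrange, Finset.mul_sum]
    refine sum_congr rfl fun i _ => ?_
    push_cast
    rw [pow_add]
    ring
  rw [sum_congr rfl step1]
  have flip := Finset.sum_range_diag_flip (n+1)
    (fun j i => ((n.choose j * (n+k).choose j * (n-j).choose i : ℕ) : ℝ) * w^(j+i))
  rw [← flip]
  refine sum_congr rfl fun m hm => ?_
  have hm' : m ≤ n := by simpa [Nat.lt_succ_iff] using hm
  have hterm : ∀ j ∈ range (m+1),
      ((n.choose j * (n+k).choose j * (n-j).choose (m-j) : ℕ) : ℝ) * w^(j+(m-j))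
      = ((n.choose j * (n+k).choose j * (n-j).choose (m-j) : ℕ) : ℝ) * w^m := by
    intro j hj
    have : j + (m - j) = m := by
      have : j ≤ m := by simpa [Nat.lt_succ_iff] using hj
      omega
    rw [this]
  rw [sum_congr rfl hterm, ← Finset.sum_mul, ← Nat.cast_sum, jacobi_aux_inner n k m hm']

/-! ### Contiguous recurrence -/

lemma jacobiP_recurrence (n k : ℕ) (t : ℝ) :
    ((2*n+k+2 : ℕ) : ℝ) * ((t+1)/2) * jacobiP n 0 (k+1) t
      = ((n+k+1:ℕ):ℝ) * jacobiP n 0 k t + ((n+1:ℕ):ℝ) * jacobiP (n+1) 0 k t := by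
  set w : ℝ := (t-1)/2 with hw
  have hu : (t+1)/2 = w + 1 := by rw [hw]; ring
  rw [hu, jacobiP_eq n (k+1) t, jacobiP_eq n k t, jacobiP_eq (n+1) k t]
  have idx1 : ∀ m : ℕ, n + (k+1) + m = n+k+1+m := fun m => by omega
  have idx2 : ∀ m : ℕ, n + 1 + k + m = n+k+1+m := fun m => by omega
  simp only [idx1, idx2, ← hw]
  set c : ℕ → ℝ := fun m => ((n.choose m * (n+k+1+m).choose m : ℕ) : ℝ) with hc
  set a : ℕ → ℝ := fun m => ((n.choose m * (n+k+m).choose m : ℕ) : ℝ) with ha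
  set b : ℕ → ℝ := fun m => (((n+1).choose m * (n+k+1+m).choose m : ℕ) : ℝ) with hb
  have hcn : c (n+1) = 0 := by simp [hc, Nat.choose_succ_self]
  have han : a (n+1) = 0 := by simp [ha, Nat.choose_succ_self]
  have lhs1 : ((2*n+k+2 : ℕ) : ℝ) * (w+1) * (∑ m ∈ range (n+1), c m * w^m)
      = (∑ m ∈ range (n+2), ((2*n+k+2 : ℕ) : ℝ) * c m * w^(m+1))
        + ∑ m ∈ range (n+2), ((2*n+k+2 : ℕ) : ℝ) * c m * w^m := by
    rw [Finset.sum_range_succ (f := fun m => ((2*n+k+2 : ℕ) : ℝ) * c m * w^(m+1)) (n+1),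
        Finset.sum_range_succ (f := fun m => ((2*n+k+2 : ℕ) : ℝ) * c m * w^m) (n+1), hcn]
    simp only [mul_zero, zero_mul, add_zero]
    rw [Finset.mul_sum, ← Finset.sum_add_distrib]
    refine sum_congr rfl fun m _ => ?_
    rw [pow_succ]
    ring
  rw [lhs1]
  have ea : ((n+k+1:ℕ):ℝ) * (∑ m ∈ range (n+1), a m * w^m)
      = ∑ m ∈ range (n+2), ((n+k+1:ℕ):ℝ) * a m * w^m := by
    rw [Finset.sum_range_succ (f := fun m => ((n+k+1:ℕ):ℝ) * a m * w^m) (n+1), han,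
      Finset.mul_sum]
    simp only [mul_zero, zero_mul, add_zero]
    exact sum_congr rfl fun m _ => (mul_assoc _ _ _).symm
  have eb : ((n+1:ℕ):ℝ) * (∑ m ∈ range (n+1+1), b m * w^m)
      = ∑ m ∈ range (n+2), ((n+1:ℕ):ℝ) * b m * w^m := by
    rw [Finset.mul_sum]
    exact sum_congr rfl fun m _ => (mul_assoc _ _ _).symm
  rw [ea, eb]
  have split : (∑ m ∈ range (n+2), ((n+k+1:ℕ):ℝ) * a m * w^m)
        + ∑ m ∈ range (n+2), ((n+1:ℕ):ℝ) * b m * w^m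
      = (∑ m ∈ range (n+2),
          (((n+k+1:ℕ):ℝ) * a m + ((n+1:ℕ):ℝ) * b m - ((2*n+k+2 : ℕ) : ℝ) * c m) * w^m)
        + ∑ m ∈ range (n+2), ((2*n+k+2 : ℕ) : ℝ) * c m * w^m := by
    rw [← Finset.sum_add_distrib, ← Finset.sum_add_distrib]
    refine sum_congr rfl fun m _ => by ring
  rw [split]
  congr 1
  rw [Finset.sum_range_succ (f := fun m => ((2*n+k+2 : ℕ) : ℝ) * c m * w^(m+1)) (n+1), hcn]
  rw [Finset.sum_range_succ'
    (f := fun m => (((n+k+1:ℕ):ℝ) * a m + ((n+1:ℕ):ℝ) * b m - ((2*n+k+2 : ℕ) : ℝ) * c m) * w^m) (n+1)]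
  have h0 : (((n+k+1:ℕ):ℝ) * a 0 + ((n+1:ℕ):ℝ) * b 0 - ((2*n+k+2 : ℕ) : ℝ) * c 0) * w^0 = 0 := by
    simp only [ha, hb, hc]
    norm_num
    push_cast
    ring
  rw [h0]
  simp only [mul_zero, zero_mul, add_zero]
  refine sum_congr rfl fun m _ => ?_
  have hB := jacobi_aux_Bprime n k m
  have i1 : n+k+1+(m+1) = n+k+m+2 := by omega
  have i2 : n+k+1+m = n+k+m+1 := by omega
  have i3 : n+k+(m+1) = n+k+m+1 := by omega
  simp only [ha, hb, hc, i1, i2, i3]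
  push_cast at hB ⊢
  rw [pow_succ]
  linear_combination (w^m * w) * hB

/-! ### The Legendre case `k = 0` -/

noncomputable def legendreFn (n : ℕ) (w : ℝ) : ℝ :=
  ∑ m ∈ range (n+1), ((n.choose m * (n+m).choose m : ℕ) : ℝ) * w^m

noncomputable def legendreD1 (n : ℕ) (w : ℝ) : ℝ :=
  ∑ m ∈ range (n+1), ((n.choose m * (n+m).choose m : ℕ) : ℝ) * ((m:ℝ) * w^(m-1))

noncomputable def legendreD2 (n : ℕ) (w : ℝ) : ℝ :=
  ∑ m ∈ range (n+1), ((n.choose m * (n+m).choose m : ℕ) : ℝ) * ((m:ℝ) * ((((m-1:ℕ)):ℝ) * w^(m-1-1)))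

lemma hasDerivAt_legendreFn (n : ℕ) (w : ℝ) :
    HasDerivAt (fun w => legendreFn n w) (legendreD1 n w) w := by
  unfold legendreFn legendreD1
  exact HasDerivAt.fun_sum fun m _ => (hasDerivAt_pow m w).const_mul _

lemma hasDerivAt_legendreD1 (n : ℕ) (w : ℝ) :
    HasDerivAt (fun w => legendreD1 n w) (legendreD2 n w) w := by
  unfold legendreD1 legendreD2
  exact HasDerivAt.fun_sum fun m _ =>
    (((hasDerivAt_pow (m-1) w).const_mul ((m:ℝ))).const_mul _)

lemma jacobi_aux_pw1 (m : ℕ) (w : ℝ) : (m:ℝ) * w^(m-1) * w = (m:ℝ) * w^m := by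
  cases m with
  | zero => simp
  | succ m => rw [Nat.add_sub_cancel, pow_succ]; ring

lemma jacobi_aux_pw2 (m : ℕ) (w : ℝ) :
    (m:ℝ) * (((m-1:ℕ)):ℝ) * w^(m-1-1) * w = (m:ℝ) * (((m-1:ℕ)):ℝ) * w^(m-1) := by
  cases m with
  | zero => simp
  | succ m =>
    simp only [Nat.add_sub_cancel]
    calc ((m+1:ℕ):ℝ) * (m:ℝ) * w^(m-1) * w = ((m+1:ℕ):ℝ) * ((m:ℝ) * w^(m-1) * w) := by ring
      _ = ((m+1:ℕ):ℝ) * ((m:ℝ) * w^m) := by rw [jacobi_aux_pw1]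
      _ = ((m+1:ℕ):ℝ) * (m:ℝ) * w^m := by ring

lemma legendre_ode (n : ℕ) (w : ℝ) :
    (2*w+1) * legendreD1 n w + w*(w+1) * legendreD2 n w
      = (n:ℝ)*((n:ℝ)+1) * legendreFn n w := by
  unfold legendreFn legendreD1 legendreD2
  rw [Finset.mul_sum, Finset.mul_sum, Finset.mul_sum, ← Finset.sum_add_distrib]
  have step : ∀ m ∈ range (n+1),
      (2*w+1) * (((n.choose m * (n+m).choose m : ℕ) : ℝ) * ((m:ℝ) * w^(m-1)))
        + w*(w+1) * (((n.choose m * (n+m).choose m : ℕ) : ℝ)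
            * ((m:ℝ) * ((((m-1:ℕ)):ℝ) * w^(m-1-1))))
      = ((n.choose m * (n+m).choose m : ℕ) : ℝ) * ((m:ℝ)*((m:ℝ)+1)) * w^m
        + ((n.choose m * (n+m).choose m : ℕ) : ℝ) * ((m:ℝ)*(m:ℝ)) * w^(m-1) := by
    intro m _
    have h1 := jacobi_aux_pw1 m w
    have h2 := jacobi_aux_pw2 m w
    have h3 : (m:ℝ) * (((m-1:ℕ)):ℝ) * w^(m-1) * w = (m:ℝ) * (((m-1:ℕ)):ℝ) * w^m := by
      cases m with
      | zero => simp
      | succ m =>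
        simp only [Nat.add_sub_cancel]
        rw [pow_succ]
        ring
    have hcast : (m:ℝ) * (((m-1:ℕ)):ℝ) = (m:ℝ) * ((m:ℝ)-1) := by
      cases m with
      | zero => simp
      | succ m => push_cast [Nat.add_sub_cancel]; ring
    linear_combination 2*((n.choose m * (n+m).choose m : ℕ):ℝ)*h1
      + ((n.choose m * (n+m).choose m : ℕ):ℝ)*w*h2
      + ((n.choose m * (n+m).choose m : ℕ):ℝ)*h2
      + ((n.choose m * (n+m).choose m : ℕ):ℝ)*h3
      + ((n.choose m * (n+m).choose m : ℕ):ℝ)*(w^m + w^(m-1))*hcast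
  rw [sum_congr rfl step, Finset.sum_add_distrib]
  have piece2 : ∑ m ∈ range (n+1),
      ((n.choose m * (n+m).choose m : ℕ) : ℝ) * ((m:ℝ)*(m:ℝ)) * w^(m-1)
      = ∑ m ∈ range n,
        ((n.choose (m+1) * (n+m+1).choose (m+1) : ℕ) : ℝ) * (((m:ℝ)+1)*((m:ℝ)+1)) * w^m := by
    rw [Finset.sum_range_succ'
      (f := fun m => ((n.choose m * (n+m).choose m : ℕ) : ℝ) * ((m:ℝ)*(m:ℝ)) * w^(m-1))]
    simp only [Nat.cast_zero, mul_zero, zero_mul, add_zero]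
    refine sum_congr rfl fun m _ => ?_
    push_cast
    ring_nf
  rw [piece2]
  rw [Finset.sum_range_succ
    (f := fun m => ((n.choose m * (n+m).choose m : ℕ) : ℝ) * ((m:ℝ)*((m:ℝ)+1)) * w^m)]
  rw [Finset.sum_range_succ
    (f := fun m => (n:ℝ)*((n:ℝ)+1) * (((n.choose m * (n+m).choose m : ℕ) : ℝ) * w^m))]
  rw [add_right_comm]
  congr 1
  · rw [← Finset.sum_add_distrib]
    refine sum_congr rfl fun m hm => ?_
    have hmn : m < n := by simpa using hm
    have hb := jacobi_aux_B0 n m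
    have hcast : ((n-m:ℕ):ℝ) = (n:ℝ) - (m:ℝ) := by
      rw [Nat.cast_sub hmn.le]
    have hbR : ((m:ℝ)+1)^2 * ((n.choose (m+1) * (n+m+1).choose (m+1) : ℕ) : ℝ)
        = ((n:ℝ)-(m:ℝ))*((n:ℝ)+(m:ℝ)+1) * ((n.choose m * (n+m).choose m : ℕ) : ℝ) := by
      have := congrArg (fun x : ℕ => (x:ℝ)) hb
      push_cast at this
      rw [hcast] at this
      push_cast
      linarith [this]
    linear_combination w^m * hbR
  · ring

lemma legendreFn_zero (n : ℕ) : legendreFn n 0 = 1 := by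
  unfold legendreFn
  rw [Finset.sum_eq_single_of_mem 0 (Finset.mem_range.mpr (Nat.succ_pos n))]
  · simp
  · intro m _ hm
    simp [zero_pow hm]

lemma legendre_energy_bound (n : ℕ) (hn : 0 < n)
    (hsq : legendreFn n (-1) * legendreFn n (-1) = 1)
    (w : ℝ) (hw : w ∈ Set.Icc (-1:ℝ) 0) : |legendreFn n w| ≤ 1 := by
  set lam : ℝ := (n:ℝ)*((n:ℝ)+1) with hlam
  have hlampos : 0 < lam := by
    have : (0:ℝ) < n := by exact_mod_cast hn
    nlinarith
  set E : ℝ → ℝ :=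
    fun x => legendreFn n x * legendreFn n x - x*(x+1)*(legendreD1 n x * legendreD1 n x)/lam
    with hEdef
  have hE : ∀ x, HasDerivAt E ((2*x+1)*(legendreD1 n x * legendreD1 n x)/lam) x := by
    intro x
    have h1 := hasDerivAt_legendreFn n x
    have h2 := hasDerivAt_legendreD1 n x
    have hx : HasDerivAt (fun y : ℝ => y*(y+1)) (1*(x+1)+x*1) x :=
      (hasDerivAt_id x).mul ((hasDerivAt_id x).add_const 1)
    have hquad : HasDerivAt (fun y : ℝ => y*(y+1) * (legendreD1 n y * legendreD1 n y))
        ((1*(x+1)+x*1) * (legendreD1 n x * legendreD1 n x)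
          + x*(x+1) * (legendreD2 n x * legendreD1 n x + legendreD1 n x * legendreD2 n x)) x :=
      hx.mul (h2.mul h2)
    have hmain := (h1.fun_mul h1).fun_sub (hquad.div_const lam)
    convert hmain using 1
    · rfl
    · rfl
    have hode := legendre_ode n x
    have hlam0 : lam ≠ 0 := hlampos.ne'
    field_simp
    linear_combination (2 * legendreD1 n x) * hode
  have hdiff : Differentiable ℝ E := fun x => (hE x).differentiableAt
  have hderiv : ∀ x, deriv E x = (2*x+1)*(legendreD1 n x * legendreD1 n x)/lam :=
    fun x => (hE x).deriv
  have mono : MonotoneOn E (Set.Icc (-(1:ℝ)/2) 0) := by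
    apply monotoneOn_of_deriv_nonneg (convex_Icc _ _) hdiff.continuous.continuousOn
      (fun x _ => (hdiff x).differentiableWithinAt)
    intro x hx
    rw [interior_Icc, Set.mem_Ioo] at hx
    rw [hderiv]
    apply div_nonneg _ hlampos.le
    apply mul_nonneg (by linarith [hx.1]) (mul_self_nonneg _)
  have anti : AntitoneOn E (Set.Icc (-1:ℝ) (-1/2)) := by
    apply antitoneOn_of_deriv_nonpos (convex_Icc _ _) hdiff.continuous.continuousOn
      (fun x _ => (hdiff x).differentiableWithinAt)
    intro x hx
    rw [interior_Icc, Set.mem_Ioo] at hx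
    rw [hderiv]
    apply div_nonpos_of_nonpos_of_nonneg _ hlampos.le
    apply mul_nonpos_of_nonpos_of_nonneg (by linarith [hx.2]) (mul_self_nonneg _)
  have E0 : E 0 = 1 := by
    simp only [hEdef, legendreFn_zero n]
    norm_num
  have Em1 : E (-1) = 1 := by
    simp only [hEdef]
    norm_num
    exact hsq
  obtain ⟨hw1, hw2⟩ := hw
  have hEw : E w ≤ 1 := by
    rcases le_total w (-1/2) with h | h
    · have := anti (Set.mem_Icc.mpr ⟨le_refl (-1:ℝ), by norm_num⟩)
        (Set.mem_Icc.mpr ⟨hw1, h⟩) hw1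
      linarith [Em1]
    · have := mono (Set.mem_Icc.mpr ⟨by linarith, hw2⟩)
        (Set.mem_Icc.mpr ⟨by norm_num, le_refl (0:ℝ)⟩) hw2
      linarith [E0]
  have hsqle : legendreFn n w * legendreFn n w ≤ E w := by
    have hterm : 0 ≤ -(w*(w+1)*(legendreD1 n w * legendreD1 n w)/lam) := by
      apply neg_nonneg.mpr
      apply div_nonpos_of_nonpos_of_nonneg _ hlampos.le
      apply mul_nonpos_of_nonpos_of_nonneg _ (mul_self_nonneg _)
      exact mul_nonpos_of_nonpos_of_nonneg hw2 (by linarith)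
    simp only [hEdef]
    linarith
  rw [abs_le_one_iff_mul_self_le_one]
  linarith

lemma jacobiP_eq_legendreFn (n : ℕ) (t : ℝ) :
    jacobiP n 0 0 t = legendreFn n ((t-1)/2) := by
  rw [jacobiP_eq n 0 t]
  unfold legendreFn
  have idx : ∀ m : ℕ, n + 0 + m = n + m := fun m => by omega
  simp only [idx]

lemma jacobiP_neg_one (n : ℕ) : jacobiP n 0 0 (-1) = (-1)^n := by
  unfold jacobiP
  rw [Finset.sum_eq_single_of_mem n (self_mem_range_succ n)]
  · norm_num
  · intro j hj hjn
    have hjn' : j < n := by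
      have := Finset.mem_range.mp hj
      omega
    have : ((-1:ℝ) + 1)/2 = 0 := by norm_num
    rw [this, zero_pow (Nat.sub_ne_zero_of_lt hjn')]
    ring

lemma legendre_abs_le (n : ℕ) (t : ℝ) (ht : t ∈ Set.Icc (-1:ℝ) 1) :
    |jacobiP n 0 0 t| ≤ 1 := by
  rcases Nat.eq_zero_or_pos n with rfl | hn
  · unfold jacobiP
    norm_num
  · obtain ⟨ht1, ht2⟩ := ht
    rw [jacobiP_eq_legendreFn]
    have hsq : legendreFn n (-1) * legendreFn n (-1) = 1 := by
      have h1 : legendreFn n (-1) = (-1:ℝ)^n := by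
        have := jacobiP_eq_legendreFn n (-1)
        have he : ((-1:ℝ)-1)/2 = -1 := by norm_num
        rw [he] at this
        rw [← this, jacobiP_neg_one]
      rw [h1, ← pow_add]
      exact Even.neg_one_pow ⟨n, rfl⟩
    exact legendre_energy_bound n hn hsq ((t-1)/2)
      (Set.mem_Icc.mpr ⟨by linarith, by linarith⟩)

/-! ### Induction on `k` -/

lemma jacobiP_pow_bound (k : ℕ) : ∀ (n : ℕ) (t : ℝ), t ∈ Set.Icc (-1:ℝ) 1 →
    |((t+1)/2)^k * jacobiP n 0 k t| ≤ 1 := by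
  induction k with
  | zero =>
    intro n t ht
    simpa using legendre_abs_le n t ht
  | succ k ih =>
    intro n t ht
    obtain ⟨ht1, ht2⟩ := ht
    have hrec := jacobiP_recurrence n k t
    have hKpos : (0:ℝ) < ((2*n+k+2 : ℕ) : ℝ) := by positivity
    have h2 : ((t+1)/2)^(k+1) * jacobiP n 0 (k+1) t
        = (((n+k+1:ℕ):ℝ) * (((t+1)/2)^k * jacobiP n 0 k t)
            + ((n+1:ℕ):ℝ) * (((t+1)/2)^k * jacobiP (n+1) 0 k t)) / ((2*n+k+2:ℕ):ℝ) := by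
      rw [eq_div_iff hKpos.ne']
      rw [pow_succ]
      linear_combination ((t+1)/2)^k * hrec
    rw [h2, abs_div, abs_of_pos hKpos]
    rw [div_le_one hKpos]
    have i1 := ih n t ⟨ht1, ht2⟩
    have i2 := ih (n+1) t ⟨ht1, ht2⟩
    calc |((n+k+1:ℕ):ℝ) * (((t+1)/2)^k * jacobiP n 0 k t)
          + ((n+1:ℕ):ℝ) * (((t+1)/2)^k * jacobiP (n+1) 0 k t)|
        ≤ |((n+k+1:ℕ):ℝ) * (((t+1)/2)^k * jacobiP n 0 k t)|
          + |((n+1:ℕ):ℝ) * (((t+1)/2)^k * jacobiP (n+1) 0 k t)| := abs_add_le _ _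
      _ ≤ ((n+k+1:ℕ):ℝ) * 1 + ((n+1:ℕ):ℝ) * 1 := by
          have b1 : |((n+k+1:ℕ):ℝ) * (((t+1)/2)^k * jacobiP n 0 k t)|
              ≤ ((n+k+1:ℕ):ℝ) * 1 := by
            rw [abs_mul, Nat.abs_cast]
            gcongr
          have b2 : |((n+1:ℕ):ℝ) * (((t+1)/2)^k * jacobiP (n+1) 0 k t)|
              ≤ ((n+1:ℕ):ℝ) * 1 := by
            rw [abs_mul, Nat.abs_cast]
            gcongr
          linarith
      _ ≤ ((2*n+k+2:ℕ):ℝ) := by push_cast; linarith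
  
/-- For every `t ∈ [-1,1]` and all nonnegative integers `n`, `k`,
`|(1+t)^k · P_n^{(0,k)}(t)| ≤ 2^k`. -/
theorem abs_one_add_pow_mul_jacobiP_le (t : ℝ) (ht : t ∈ Set.Icc (-1 : ℝ) 1)
    (n k : ℕ) :
    |(1 + t) ^ k * jacobiP n 0 k t| ≤ 2 ^ k := by
  have key := jacobiP_pow_bound k n t ht
  have hsplit : (1 + t) ^ k * jacobiP n 0 k t
      = 2^k * (((t+1)/2)^k * jacobiP n 0 k t) := by
    rw [← mul_assoc, ← mul_pow]
    norm_num
    left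
    ring
  rw [hsplit, abs_mul]
  have : |(2:ℝ)^k| = 2^k := abs_of_pos (by positivity)
  rw [this]
  calc (2:ℝ)^k * |((t+1)/2)^k * jacobiP n 0 k t| ≤ 2^k * 1 := by gcongr
    _ = 2^k := mul_one _
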